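/- Let k ⊆ k' be fields and let 0 ≤ m ≤ n be integers. Let a be an (n+1)×(m+1) matrix over k' of rank m+1; let g be an (n+1)×(n+1) matrix over k' whose entries form an algebraically independent family over the subfield k(a) of k' generated over k by the entries of a; and let h be an (m+1)×(m+1) matrix over k' whose entries form an algebraically independent family over the subfield k(a,g) generated over k by the entries of a and g. (Then g and h are invertible, since their determinants are nonzero polynomials evaluated at algebraically independent elements.) Set b = g·a·h^{-1}. Then the entries of b form an algebraically independent family over the subfield k(a,h) generated over k by the entries of a and h, and the entries of h form an algebraically independent family over the subfield k(a,b) generated over k by the entries of a and b. -/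

import Mathlib

open scoped Matrix
open Set

section congr

variable {k K k' : Type*} [Field k] [Field K] [Field k'] [Algebra k k'] [Algebra K k']

/-- Transfer algebraic independence between two intermediate fields (over possibly
different base fields) with the same carrier. -/
theorem algIndep_congr_carrier {ι : Type*} (F : IntermediateField k k')
    (G : IntermediateField K k') (hFG : (F : Set k') = (G : Set k')) (x : ι → k') :
    AlgebraicIndependent F x ↔ AlgebraicIndependent G x := by
  have hmem : ∀ z : k', z ∈ F ↔ z ∈ G := fun z => by
    constructor <;> intro hz
    · have : z ∈ (G : Set k') := hFG ▸ hz; exact this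
    · have : z ∈ (F : Set k') := hFG ▸ hz; exact this
  let e : F ≃+* G :=
    { toFun := fun a => ⟨a.1, (hmem a.1).1 a.2⟩
      invFun := fun b => ⟨b.1, (hmem b.1).2 b.2⟩
      left_inv := fun a => rfl
      right_inv := fun b => rfl
      map_mul' := fun _ _ => rfl
      map_add' := fun _ _ => rfl }
  have h : RingHom.comp (algebraMap G k') (e : F →+* G)
      = RingHom.comp (RingHom.id k') (algebraMap F k') := by
    ext a; rfl
  have := algebraicIndependent_ringHom_iff_of_comp_eq (x := x) e (RingHom.id k')
    (fun _ _ hab => hab) h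
  simpa using this.symm

/-- Algebraic independence over a larger intermediate field implies it over a smaller one. -/
theorem algIndep_mono {ι : Type*} {F G : IntermediateField k k'} (hFG : F ≤ G) {x : ι → k'}
    (hx : AlgebraicIndependent G x) : AlgebraicIndependent F x := by
  refine AlgebraicIndependent.of_ringHom_of_comp_eq (f := (IntermediateField.inclusion hFG : F →+* G))
    (g := RingHom.id k') (by simpa using hx) (fun _ _ hab => Subtype.ext (congrArg Subtype.val hab : _)) ?_
  ext a; rfl

end congr

open MvPolynomial

/-- Algebraic independence is preserved by a split-surjective linear substitution
with coefficients in the base ring. -/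
theorem algIndep_linear_comb {F E ι κ : Type*} [CommRing F] [CommRing E] [Algebra F E]
    [Fintype ι] [Fintype κ] [DecidableEq κ] {x : ι → E} (hx : AlgebraicIndependent F x)
    (c : κ → ι → F) (d : ι → κ → F)
    (hcd : ∀ j j', (∑ i, c j i * d i j') = if j = j' then 1 else 0)
    {y : κ → E} (hy : ∀ j, y j = ∑ i, c j i • x i) :
    AlgebraicIndependent F y := by
  let φ : MvPolynomial κ F →ₐ[F] MvPolynomial ι F :=
    aeval (fun j => ∑ i, C (c j i) * X i)
  let ψ : MvPolynomial ι F →ₐ[F] MvPolynomial κ F :=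
    aeval (fun i => ∑ j, C (d i j) * X j)
  have hψφ : ψ.comp φ = AlgHom.id F (MvPolynomial κ F) := by
    apply MvPolynomial.algHom_ext
    intro j
    simp only [AlgHom.comp_apply, AlgHom.id_apply, φ, ψ, aeval_X, map_sum, map_mul, aeval_C,
      algebraMap_eq, Finset.mul_sum]
    rw [Finset.sum_comm]
    have key : ∀ j' : κ, (∑ i, (C (c j i) : MvPolynomial κ F) * C (d i j'))
        = C (if j = j' then (1:F) else 0) := by
      intro j'
      calc ∑ i, (C (c j i) : MvPolynomial κ F) * C (d i j') = ∑ i, (C (c j i * d i j') : MvPolynomial κ F) := by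
            exact Finset.sum_congr rfl fun i _ => (map_mul C _ _).symm
        _ = C (∑ i, c j i * d i j') := (map_sum C _ _).symm
        _ = _ := by rw [hcd]
    have step : ∀ j' : κ, (∑ i, C (c j i) * (C (d i j') * X j'))
        = C (if j = j' then (1:F) else 0) * X j' := by
      intro j'
      calc ∑ i, C (c j i) * (C (d i j') * X j')
          = (∑ i, C (c j i) * C (d i j')) * X j' := by
            rw [Finset.sum_mul]; exact Finset.sum_congr rfl fun i _ => (mul_assoc _ _ _).symm
        _ = _ := by rw [key]
    rw [Finset.sum_congr rfl fun j' _ => step j']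
    simp [apply_ite C, ite_mul, Finset.sum_ite_eq]
  have hφinj : Function.Injective φ := by
    intro p q hpq
    have h2 := congrArg ψ hpq
    calc p = ψ (φ p) := by rw [show ψ (φ p) = (ψ.comp φ) p from rfl, hψφ]; rfl
    _ = ψ (φ q) := h2
    _ = q := by rw [show ψ (φ q) = (ψ.comp φ) q from rfl, hψφ]; rfl
  have hcomp : (aeval x).comp φ = aeval y := by
    apply MvPolynomial.algHom_ext
    intro j
    simp only [AlgHom.comp_apply, φ, aeval_X, map_sum, map_mul, aeval_C]
    rw [hy j]
    exact Finset.sum_congr rfl fun i _ => by rw [Algebra.smul_def]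
  rw [algebraicIndependent_iff_injective_aeval] at hx ⊢
  have heq : ⇑(aeval (R := F) y) = ⇑(aeval x) ∘ ⇑φ := by rw [← hcomp]; rfl
  rw [heq]
  exact Function.Injective.comp hx hφinj

open MvPolynomial Matrix

/-- The determinant of a matrix with algebraically independent entries is nonzero. -/
theorem det_ne_zero_of_algIndep {F E : Type*} [CommRing F] [Nontrivial F] [CommRing E]
    [Nontrivial E] [Algebra F E] {N : ℕ}
    {g : Matrix (Fin N) (Fin N) E}
    (hg : AlgebraicIndependent F (fun p : Fin N × Fin N => g p.1 p.2)) :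
    g.det ≠ 0 := by
  classical
  let M : Matrix (Fin N) (Fin N) (MvPolynomial (Fin N × Fin N) F) :=
    Matrix.of fun i j => X (i, j)
  have hMne : M.det ≠ 0 := by
    intro h0
    have := congrArg (MvPolynomial.eval (fun p : Fin N × Fin N =>
      if p.1 = p.2 then (1:F) else 0)) h0
    rw [map_zero, RingHom.map_det] at this
    have h1 : ((MvPolynomial.eval fun p : Fin N × Fin N =>
        if p.1 = p.2 then (1:F) else 0).mapMatrix M) = (1 : Matrix (Fin N) (Fin N) F) := by
      ext i j
      simp [M, Matrix.one_apply]
    rw [h1, Matrix.det_one] at this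
    exact one_ne_zero this
  have hdet : (aeval (fun p : Fin N × Fin N => g p.1 p.2) : MvPolynomial _ F →ₐ[F] E) M.det
      = g.det := by
    rw [AlgHom.map_det]
    congr 1
    ext i j
    simp [M]
  intro h0
  have := hg.eq_zero_of_aeval_eq_zero M.det (by rw [hdet, h0])
  exact hMne this

/-- A matrix whose associated linear map is injective has a left inverse. -/
theorem exists_left_inverse_of_injective {K : Type*} [Field K] {p q : ℕ}
    (A : Matrix (Fin p) (Fin q) K) (hA : Function.Injective A.mulVecLin) :
    ∃ L : Matrix (Fin q) (Fin p) K, L * A = 1 := by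
  obtain ⟨f, hf⟩ := LinearMap.exists_leftInverse_of_injective A.mulVecLin
    (LinearMap.ker_eq_bot.mpr hA)
  refine ⟨LinearMap.toMatrix' f, ?_⟩
  have h2 : LinearMap.toMatrix' (f.comp A.mulVecLin) = LinearMap.toMatrix' f * A := by
    rw [LinearMap.toMatrix'_comp]
    congr 1
    exact LinearMap.toMatrix'_toLin' A
  rw [← h2, hf]
  simp

/-- A matrix over a field of full column rank has injective `mulVecLin`. -/
theorem mulVecLin_injective_of_rank {K : Type*} [Field K] {p q : ℕ}
    (A : Matrix (Fin p) (Fin q) K) (hA : A.rank = q) :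
    Function.Injective A.mulVecLin := by
  rw [← LinearMap.ker_eq_bot]
  have h1 := LinearMap.finrank_range_add_finrank_ker A.mulVecLin
  rw [show Module.finrank K (LinearMap.range A.mulVecLin) = q from hA,
    show Module.finrank K (Fin q → K) = q by simp] at h1
  exact Submodule.finrank_eq_zero.mp (by omega)

open MvPolynomial Set Function

section sum

variable {F E : Type*} [Field F] [Field E] [Algebra F E] {ι κ : Type*}
variable {x : ι → E} {y : κ → E}

/-- Clearing denominators: a `Q`-algebra map out of `MvPolynomial κ Q`, `Q` the fraction
field of `D`, is injective as soon as its restriction to polynomials over `D` is. -/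
theorem injective_aeval_fractionRing {D : Type*} [CommRing D] [IsDomain D]
    (ψ : MvPolynomial κ (FractionRing D) →+* E)
    (h : Injective (ψ.comp (MvPolynomial.map (algebraMap D (FractionRing D))))) :
    Injective ψ := by
  classical
  set Q := FractionRing D
  have key : ∀ r : MvPolynomial κ Q, ψ r = 0 → r = 0 := by
    intro r hr
    obtain ⟨b, hb⟩ := IsLocalization.exist_integer_multiples_of_finset
      (nonZeroDivisors D) (S := Q) (r.support.image r.coeff)
    set q : MvPolynomial κ Q := C (algebraMap D Q b) * r with hq
    have hcoeff : ∀ c : κ →₀ ℕ, ∃ d0 : D, algebraMap D Q d0 = q.coeff c := by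
      intro c
      by_cases hc : c ∈ r.support
      · obtain ⟨d0, hd0⟩ := hb (r.coeff c) (Finset.mem_image_of_mem _ hc)
        exact ⟨d0, by rw [hd0, Algebra.smul_def, hq, coeff_C_mul]⟩
      · refine ⟨0, ?_⟩
        rw [map_zero, hq, coeff_C_mul, notMem_support_iff.mp hc, mul_zero]
    choose w hw using hcoeff
    set r0 : MvPolynomial κ D := q.support.sum fun c => monomial c (w c) with hr0
    have hmap : MvPolynomial.map (algebraMap D Q) r0 = q := by
      apply MvPolynomial.ext
      intro c
      rw [coeff_map, hr0, coeff_sum]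
      by_cases hc : c ∈ q.support
      · rw [Finset.sum_eq_single c (fun c' _ hne => by rw [coeff_monomial, if_neg hne])
          (fun hn => absurd hc hn)]
        rw [coeff_monomial, if_pos rfl, hw]
      · have h1 : ∀ c' ∈ q.support, coeff c (monomial c' (w c')) = 0 := by
          intro c' hc'
          rcases eq_or_ne c' c with rfl | hne
          · have hwc : w c' = 0 := by
              have h2 := hw c'
              rw [notMem_support_iff.mp hc] at h2
              exact (map_eq_zero_iff _ (IsFractionRing.injective D Q)).mp h2
            rw [hwc, coeff_monomial]
            simp
          · rw [coeff_monomial, if_neg hne]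
        rw [Finset.sum_eq_zero h1, map_zero, notMem_support_iff.mp hc]
    have hψq : ψ q = 0 := by rw [hq, _root_.map_mul, hr, mul_zero]
    have : r0 = 0 := h (by rw [RingHom.comp_apply, hmap, hψq, map_zero])
    have hq0 : q = 0 := by rw [← hmap, this, map_zero]
    have hb0 : (C (algebraMap D Q b) : MvPolynomial κ Q) ≠ 0 := by
      simp only [ne_eq, C_eq_zero]
      exact fun h0 => nonZeroDivisors.coe_ne_zero b
        ((map_eq_zero_iff _ (IsFractionRing.injective D Q)).mp h0)
    rcases mul_eq_zero.mp (hq ▸ hq0) with h0 | h0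
    · exact absurd h0 hb0
    · exact h0
  intro p q hpq
  have := key (p - q) (by rw [map_sub, hpq, sub_self])
  exact sub_eq_zero.mp this


variable (hx : AlgebraicIndependent F x)
include hx

theorem algIndep_sumElim_of_adjoin (hy : AlgebraicIndependent
      (IntermediateField.adjoin F (Set.range x)) y) :
    AlgebraicIndependent F (Sum.elim y x) := by
  classical
  letI : Algebra (FractionRing (MvPolynomial ι F)) E :=
    (IsFractionRing.lift (algebraicIndependent_iff_injective_aeval.2 hx)).toAlgebra
  set Q := FractionRing (MvPolynomial ι F)
  have bridge : AlgebraicIndependent (IntermediateField.adjoin F (Set.range x)) y ↔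
      AlgebraicIndependent Q y := by
    have hcomp : RingHom.comp (algebraMap (IntermediateField.adjoin F (Set.range x)) E)
        (hx.aevalEquivField : Q →+* (IntermediateField.adjoin F (Set.range x)))
        = RingHom.comp (RingHom.id E) (algebraMap Q E) := by
      ext a
      exact hx.aevalEquivField_apply_coe a
    have := algebraicIndependent_ringHom_iff_of_comp_eq (x := y)
      (f := hx.aevalEquivField) (g := RingHom.id E) (fun _ _ hab => hab) hcomp
    simpa using this
  set ψ₀ : MvPolynomial κ (MvPolynomial ι F) →+* E :=
    ((aeval (R := Q) y : MvPolynomial κ Q →ₐ[Q] E) : MvPolynomial κ Q →+* E).comp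
      (MvPolynomial.map (algebraMap (MvPolynomial ι F) Q)) with hψ₀def
  have hhom : ψ₀.comp ((sumAlgEquiv F κ ι :
        MvPolynomial (κ ⊕ ι) F ≃+* MvPolynomial κ (MvPolynomial ι F)) :
        MvPolynomial (κ ⊕ ι) F →+* MvPolynomial κ (MvPolynomial ι F))
      = ((aeval (R := F) (Sum.elim y x) : MvPolynomial (κ ⊕ ι) F →ₐ[F] E) :
        MvPolynomial (κ ⊕ ι) F →+* E) := by
    apply MvPolynomial.ringHom_ext
    · intro r
      show ψ₀ ((sumAlgEquiv F κ ι) (C r)) = _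
      rw [show (sumAlgEquiv F κ ι) (C r) = sumToIter F κ ι (C r) by rw [sumAlgEquiv_C_inl, sumToIter_C], sumToIter_C]
      simp only [ψ₀, RingHom.comp_apply, map_C, RingHom.coe_coe, aeval_C]
      show (algebraMap Q E) ((algebraMap (MvPolynomial ι F) Q) (C r)) = _
      rw [show (algebraMap Q E) = IsFractionRing.lift
        (algebraicIndependent_iff_injective_aeval.1 hx) from rfl]
      rw [IsFractionRing.lift_algebraMap]
      simp
    · rintro (j | i)
      · show ψ₀ ((sumAlgEquiv F κ ι) (X (Sum.inl j))) = _
        rw [show (sumAlgEquiv F κ ι) (X (Sum.inl j)) = sumToIter F κ ι (X (Sum.inl j)) by rw [sumAlgEquiv_X_inl, sumToIter_Xl],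
          sumToIter_Xl]
        simp [ψ₀]
      · show ψ₀ ((sumAlgEquiv F κ ι) (X (Sum.inr i))) = _
        rw [show (sumAlgEquiv F κ ι) (X (Sum.inr i)) = sumToIter F κ ι (X (Sum.inr i)) by rw [sumAlgEquiv_X_inr, sumToIter_Xr],
          sumToIter_Xr]
        simp only [ψ₀, RingHom.comp_apply, map_C, RingHom.coe_coe, aeval_C]
        show (algebraMap Q E) ((algebraMap (MvPolynomial ι F) Q) (X i)) = _
        rw [show (algebraMap Q E) = IsFractionRing.lift
          (algebraicIndependent_iff_injective_aeval.1 hx) from rfl]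
        rw [IsFractionRing.lift_algebraMap]
        simp
  have hψ₀inj : Injective ψ₀ := by
    have h3 : Injective (⇑((aeval (R := Q) y : MvPolynomial κ Q →ₐ[Q] E) :
        MvPolynomial κ Q →+* E) ∘ ⇑(MvPolynomial.map (algebraMap (MvPolynomial ι F) Q))) :=
      Injective.comp (algebraicIndependent_iff_injective_aeval.mp (bridge.mp hy))
        (MvPolynomial.map_injective _ (IsFractionRing.injective _ Q))
    exact h3
  rw [algebraicIndependent_iff_injective_aeval]
  have hfun : ⇑(aeval (R := F) (Sum.elim y x)) =
      ⇑ψ₀ ∘ ⇑(sumAlgEquiv F κ ι) := by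
    funext p
    exact (DFunLike.congr_fun hhom p).symm
  rw [hfun]
  exact hψ₀inj.comp (sumAlgEquiv F κ ι).bijective.injective

theorem algIndep_adjoin_of_sumElim (hxy : AlgebraicIndependent F (Sum.elim y x)) :
    AlgebraicIndependent (IntermediateField.adjoin F (Set.range x)) y := by
  classical
  letI : Algebra (FractionRing (MvPolynomial ι F)) E :=
    (IsFractionRing.lift (algebraicIndependent_iff_injective_aeval.2 hx)).toAlgebra
  set Q := FractionRing (MvPolynomial ι F)
  have bridge : AlgebraicIndependent (IntermediateField.adjoin F (Set.range x)) y ↔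
      AlgebraicIndependent Q y := by
    have hcomp : RingHom.comp (algebraMap (IntermediateField.adjoin F (Set.range x)) E)
        (hx.aevalEquivField : Q →+* (IntermediateField.adjoin F (Set.range x)))
        = RingHom.comp (RingHom.id E) (algebraMap Q E) := by
      ext a
      exact hx.aevalEquivField_apply_coe a
    have := algebraicIndependent_ringHom_iff_of_comp_eq (x := y)
      (f := hx.aevalEquivField) (g := RingHom.id E) (fun _ _ hab => hab) hcomp
    simpa using this
  set ψ₀ : MvPolynomial κ (MvPolynomial ι F) →+* E :=
    ((aeval (R := Q) y : MvPolynomial κ Q →ₐ[Q] E) : MvPolynomial κ Q →+* E).comp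
      (MvPolynomial.map (algebraMap (MvPolynomial ι F) Q)) with hψ₀def
  have hhom : ψ₀.comp ((sumAlgEquiv F κ ι :
        MvPolynomial (κ ⊕ ι) F ≃+* MvPolynomial κ (MvPolynomial ι F)) :
        MvPolynomial (κ ⊕ ι) F →+* MvPolynomial κ (MvPolynomial ι F))
      = ((aeval (R := F) (Sum.elim y x) : MvPolynomial (κ ⊕ ι) F →ₐ[F] E) :
        MvPolynomial (κ ⊕ ι) F →+* E) := by
    apply MvPolynomial.ringHom_ext
    · intro r
      show ψ₀ ((sumAlgEquiv F κ ι) (C r)) = _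
      rw [show (sumAlgEquiv F κ ι) (C r) = sumToIter F κ ι (C r) by rw [sumAlgEquiv_C_inl, sumToIter_C], sumToIter_C]
      simp only [ψ₀, RingHom.comp_apply, map_C, RingHom.coe_coe, aeval_C]
      show (algebraMap Q E) ((algebraMap (MvPolynomial ι F) Q) (C r)) = _
      rw [show (algebraMap Q E) = IsFractionRing.lift
        (algebraicIndependent_iff_injective_aeval.1 hx) from rfl]
      rw [IsFractionRing.lift_algebraMap]
      simp
    · rintro (j | i)
      · show ψ₀ ((sumAlgEquiv F κ ι) (X (Sum.inl j))) = _
        rw [show (sumAlgEquiv F κ ι) (X (Sum.inl j)) = sumToIter F κ ι (X (Sum.inl j)) by rw [sumAlgEquiv_X_inl, sumToIter_Xl],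
          sumToIter_Xl]
        simp [ψ₀]
      · show ψ₀ ((sumAlgEquiv F κ ι) (X (Sum.inr i))) = _
        rw [show (sumAlgEquiv F κ ι) (X (Sum.inr i)) = sumToIter F κ ι (X (Sum.inr i)) by rw [sumAlgEquiv_X_inr, sumToIter_Xr],
          sumToIter_Xr]
        simp only [ψ₀, RingHom.comp_apply, map_C, RingHom.coe_coe, aeval_C]
        show (algebraMap Q E) ((algebraMap (MvPolynomial ι F) Q) (X i)) = _
        rw [show (algebraMap Q E) = IsFractionRing.lift
          (algebraicIndependent_iff_injective_aeval.1 hx) from rfl]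
        rw [IsFractionRing.lift_algebraMap]
        simp
  have hψ₀inj : Injective ψ₀ := by
    have hfun : ⇑ψ₀ = ⇑(aeval (R := F) (Sum.elim y x)) ∘ ⇑(sumAlgEquiv F κ ι).symm := by
      funext p
      have h2 := DFunLike.congr_fun hhom ((sumAlgEquiv F κ ι).symm p)
      calc ψ₀ p = ψ₀ ((sumAlgEquiv F κ ι) ((sumAlgEquiv F κ ι).symm p)) := by
            rw [AlgEquiv.apply_symm_apply]
        _ = aeval (Sum.elim y x) ((sumAlgEquiv F κ ι).symm p) := h2
    rw [hfun]
    exact (algebraicIndependent_iff_injective_aeval.mp hxy).comp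
      (sumAlgEquiv F κ ι).symm.bijective.injective
  refine bridge.mpr ?_
  rw [algebraicIndependent_iff_injective_aeval]
  exact injective_aeval_fractionRing _ hψ₀inj

end sum

/-- Algebraic-independence formulation of Lemma 3.6: with `a` of maximal rank over `k'`,
`g` generic over `k(a)` and `h` generic over `k(a,g)`, the matrices `g` and `h` are
invertible and, setting `b = g·a·h⁻¹`, the entries of `b` are algebraically independent
over `k(a,h)` and the entries of `h` are algebraically independent over `k(a,b)`. -/
theorem generic_conjugation (k k' : Type*) [Field k] [Field k'] [Algebra k k']
    (n m : ℕ) (hmn : m ≤ n)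
    (a : Matrix (Fin (n + 1)) (Fin (m + 1)) k') (ha : a.rank = m + 1)
    (g : Matrix (Fin (n + 1)) (Fin (n + 1)) k')
    (h : Matrix (Fin (m + 1)) (Fin (m + 1)) k')
    (hg : AlgebraicIndependent
      (IntermediateField.adjoin k (Set.range fun p : Fin (n + 1) × Fin (m + 1) => a p.1 p.2))
      (fun p : Fin (n + 1) × Fin (n + 1) => g p.1 p.2))
    (hh : AlgebraicIndependent
      (IntermediateField.adjoin k
        ((Set.range fun p : Fin (n + 1) × Fin (m + 1) => a p.1 p.2) ∪
          (Set.range fun p : Fin (n + 1) × Fin (n + 1) => g p.1 p.2)))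
      (fun p : Fin (m + 1) × Fin (m + 1) => h p.1 p.2)) :
    IsUnit g.det ∧ IsUnit h.det ∧
      AlgebraicIndependent
        (IntermediateField.adjoin k
          ((Set.range fun p : Fin (n + 1) × Fin (m + 1) => a p.1 p.2) ∪
            (Set.range fun p : Fin (m + 1) × Fin (m + 1) => h p.1 p.2)))
        (fun p : Fin (n + 1) × Fin (m + 1) => (g * a * h⁻¹) p.1 p.2) ∧
      AlgebraicIndependent
        (IntermediateField.adjoin k
          ((Set.range fun p : Fin (n + 1) × Fin (m + 1) => a p.1 p.2) ∪
            (Set.range fun p : Fin (n + 1) × Fin (m + 1) => (g * a * h⁻¹) p.1 p.2)))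
        (fun p : Fin (m + 1) × Fin (m + 1) => h p.1 p.2) := by
  classical
  set Ka := IntermediateField.adjoin k
    (Set.range fun p : Fin (n + 1) × Fin (m + 1) => a p.1 p.2) with hKa
  have hdetg : g.det ≠ 0 := det_ne_zero_of_algIndep hg
  have hdeth : h.det ≠ 0 := det_ne_zero_of_algIndep hh
  -- notation for the entry families and entry sets
  set af : Fin (n + 1) × Fin (m + 1) → k' := fun p => a p.1 p.2 with haf
  set gf : Fin (n + 1) × Fin (n + 1) → k' := fun p => g p.1 p.2 with hgf
  set hf : Fin (m + 1) × Fin (m + 1) → k' := fun p => h p.1 p.2 with hhf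
  set bf : Fin (n + 1) × Fin (m + 1) → k' := fun p => (g * a * h⁻¹) p.1 p.2 with hbf
  set Sa : Set k' := Set.range af with hSa
  set Sg : Set k' := Set.range gf with hSg
  set Sh : Set k' := Set.range hf with hSh
  set Sb : Set k' := Set.range bf with hSb
  set Kah := IntermediateField.adjoin k (Sa ∪ Sh) with hKah
  -- carrier identifications
  have hcarg : ((IntermediateField.adjoin Ka Sg : IntermediateField Ka k') : Set k')
      = ((IntermediateField.adjoin k (Sa ∪ Sg) : IntermediateField k k') : Set k') := by
    have e := IntermediateField.adjoin_adjoin_left (F := k) (E := k') (S := Sa) Sg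
    calc ((IntermediateField.adjoin Ka Sg : IntermediateField Ka k') : Set k')
        = (((IntermediateField.adjoin Ka Sg).restrictScalars k : IntermediateField k k') : Set k')
          := rfl
      _ = _ := by rw [e]
  have hcarh : ((IntermediateField.adjoin Ka Sh : IntermediateField Ka k') : Set k')
      = (Kah : Set k') := by
    have e := IntermediateField.adjoin_adjoin_left (F := k) (E := k') (S := Sa) Sh
    calc ((IntermediateField.adjoin Ka Sh : IntermediateField Ka k') : Set k')
        = (((IntermediateField.adjoin Ka Sh).restrictScalars k : IntermediateField k k') : Set k')
          := rfl
      _ = _ := by rw [hKah, e]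
  have hcarb : ((IntermediateField.adjoin Ka Sb : IntermediateField Ka k') : Set k')
      = ((IntermediateField.adjoin k (Sa ∪ Sb) : IntermediateField k k') : Set k') := by
    have e := IntermediateField.adjoin_adjoin_left (F := k) (E := k') (S := Sa) Sb
    calc ((IntermediateField.adjoin Ka Sb : IntermediateField Ka k') : Set k')
        = (((IntermediateField.adjoin Ka Sb).restrictScalars k : IntermediateField k k') : Set k')
          := rfl
      _ = _ := by rw [e]
  -- exchange: `g` is generic over `k(a,h)`
  have hh' : AlgebraicIndependent (IntermediateField.adjoin Ka Sg) hf :=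
    (algIndep_congr_carrier (IntermediateField.adjoin k (Sa ∪ Sg))
      (IntermediateField.adjoin Ka Sg) hcarg.symm hf).mp hh
  have hsum_hg : AlgebraicIndependent Ka (Sum.elim hf gf) :=
    algIndep_sumElim_of_adjoin hg hh'
  have hf_Ka : AlgebraicIndependent Ka hf := by
    have h2 := hsum_hg.comp Sum.inl Sum.inl_injective
    rwa [Sum.elim_comp_inl] at h2
  have hsum_gh : AlgebraicIndependent Ka (Sum.elim gf hf) := by
    have h2 := hsum_hg.comp Sum.swap Sum.swap_leftInverse.injective
    have h3 : (Sum.elim hf gf) ∘ Sum.swap = Sum.elim gf hf := by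
      funext s; cases s <;> rfl
    rwa [h3] at h2
  have hgah : AlgebraicIndependent (IntermediateField.adjoin Ka (Set.range hf)) gf :=
    algIndep_adjoin_of_sumElim hf_Ka hsum_gh
  have hg_Kah : AlgebraicIndependent Kah gf :=
    (algIndep_congr_carrier Kah (IntermediateField.adjoin Ka Sh) hcarh.symm gf).mpr hgah
  -- set up matrices over `k(a,h)`
  have hmemA : ∀ i j, a i j ∈ Kah := fun i j =>
    IntermediateField.subset_adjoin _ _ (Or.inl ⟨(i, j), rfl⟩)
  have hmemH : ∀ i j, h i j ∈ Kah := fun i j =>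
    IntermediateField.subset_adjoin _ _ (Or.inr ⟨(i, j), rfl⟩)
  set A' : Matrix (Fin (n + 1)) (Fin (m + 1)) Kah :=
    Matrix.of (fun i j => (⟨a i j, hmemA i j⟩ : Kah)) with hA'
  set H' : Matrix (Fin (m + 1)) (Fin (m + 1)) Kah :=
    Matrix.of (fun i j => (⟨h i j, hmemH i j⟩ : Kah)) with hH'
  set f : Kah →+* k' := algebraMap Kah k' with hfdef
  have hfinj : Function.Injective f := fun z w hzw => Subtype.ext hzw
  have hHmap : H'.map f = h := by ext i j; rfl
  have hAmap : A'.map f = a := by ext i j; rfl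
  have hdetH' : IsUnit H'.det := by
    rw [isUnit_iff_ne_zero]
    intro h0
    apply hdeth
    have h1 : h.det = f H'.det := by
      calc h.det = (H'.map f).det := by rw [hHmap]
        _ = f H'.det := (RingHom.map_det f H').symm
    rw [h1, h0, map_zero]
  have hHH : H'⁻¹.map f = h⁻¹ := by
    have h1 : H'⁻¹ * H' = 1 := Matrix.nonsing_inv_mul H' hdetH'
    have h2 : (H'⁻¹.map f) * h = 1 := by
      calc (H'⁻¹.map f) * h = (H'⁻¹ * H').map f := by
            rw [Matrix.map_mul, hHmap]
        _ = (1 : Matrix (Fin (m + 1)) (Fin (m + 1)) Kah).map f := by rw [h1]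
        _ = 1 := by ext i j; simp [Matrix.one_apply, apply_ite f]
    exact (Matrix.inv_eq_left_inv h2).symm
  set M' : Matrix (Fin (n + 1)) (Fin (m + 1)) Kah := A' * H'⁻¹ with hM'
  have hM'map : M'.map f = a * h⁻¹ := by
    rw [hM', Matrix.map_mul, hAmap, hHH]
  -- left inverse of `M'` over `k(a,h)`
  have hainj : Function.Injective a.mulVecLin := mulVecLin_injective_of_rank a ha
  have hah_inj : Function.Injective (a * h⁻¹).mulVec := by
    intro p q hpq
    rw [← Matrix.mulVec_mulVec, ← Matrix.mulVec_mulVec] at hpq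
    have h5 := hainj (by exact hpq : a.mulVecLin (h⁻¹.mulVec p) = a.mulVecLin (h⁻¹.mulVec q))
    have h6 := congrArg h.mulVec h5
    rwa [Matrix.mulVec_mulVec, Matrix.mulVec_mulVec, Matrix.mul_nonsing_inv h
      (isUnit_iff_ne_zero.mpr hdeth), Matrix.one_mulVec, Matrix.one_mulVec] at h6
  have hM'inj : Function.Injective M'.mulVecLin := by
    intro v w hvw
    have hvw' : M'.mulVec v = M'.mulVec w := hvw
    have hmapv : ∀ u : Fin (m + 1) → Kah,
        (a * h⁻¹).mulVec (f ∘ u) = f ∘ (M'.mulVec u) := by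
      intro u
      funext i
      rw [← hM'map, ← RingHom.map_mulVec]
      rfl
    have h3 : (a * h⁻¹).mulVec (f ∘ v) = (a * h⁻¹).mulVec (f ∘ w) := by
      rw [hmapv, hmapv, hvw']
    have h4 := hah_inj h3
    funext j
    exact hfinj (congrFun h4 j)
  obtain ⟨L, hL⟩ := exists_left_inverse_of_injective M' hM'inj
  -- part 3 : entries of `b` are independent over `k(a,h)`
  have hb3 : AlgebraicIndependent Kah bf := by
    refine algIndep_linear_comb (x := gf) hg_Kah
      (fun p q => if p.1 = q.1 then M' q.2 p.2 else 0)
      (fun q p => if q.1 = p.1 then L p.2 q.2 else 0) ?_ ?_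
    · intro p p'
      rw [Fintype.sum_prod_type]
      have hterm : ∀ i'' : Fin (n + 1),
          (∑ r : Fin (n + 1), (if p.1 = i'' then M' r p.2 else 0) *
            (if i'' = p'.1 then L p'.2 r else 0))
          = if p.1 = i'' then (if i'' = p'.1 then
              ∑ r : Fin (n + 1), M' r p.2 * L p'.2 r else 0) else 0 := by
        intro i''
        split_ifs with h1 h2 <;> simp
      rw [Finset.sum_congr rfl fun i'' _ => hterm i'', Finset.sum_ite_eq]
      simp only [Finset.mem_univ, if_true]
      have hsum : (∑ r : Fin (n + 1), M' r p.2 * L p'.2 r)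
          = (1 : Matrix (Fin (m + 1)) (Fin (m + 1)) Kah) p'.2 p.2 := by
        rw [← hL, Matrix.mul_apply]
        exact Finset.sum_congr rfl fun r _ => mul_comm _ _
      rw [hsum, Matrix.one_apply]
      rcases Prod.mk.injEq p.1 p.2 p'.1 p'.2 with _
      by_cases h1 : p.1 = p'.1 <;> by_cases h2 : p.2 = p'.2 <;>
        simp [h1, h2, Prod.ext_iff, eq_comm]
    · intro p
      show (g * a * h⁻¹) p.1 p.2 = _
      rw [Matrix.mul_assoc, Matrix.mul_apply, Fintype.sum_prod_type]
      have hterm : ∀ i'' : Fin (n + 1),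
          (∑ r : Fin (n + 1), (if p.1 = i'' then M' r p.2 else 0) • g i'' r)
          = if p.1 = i'' then (∑ r : Fin (n + 1), M' r p.2 • g i'' r) else 0 := by
        intro i''
        split_ifs with h1 <;> simp
      rw [Finset.sum_congr rfl fun i'' _ => hterm i'', Finset.sum_ite_eq]
      simp only [Finset.mem_univ, if_true]
      refine Finset.sum_congr rfl fun r _ => ?_
      rw [Algebra.smul_def]
      rw [show (algebraMap Kah k') (M' r p.2) = (a * h⁻¹) r p.2 by
        rw [← hM'map]; rfl]
      ring
  -- part 4 : entries of `h` are independent over `k(a,b)`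
  have hb' : AlgebraicIndependent (IntermediateField.adjoin Ka Sh) bf :=
    (algIndep_congr_carrier Kah (IntermediateField.adjoin Ka Sh) hcarh.symm bf).mp hb3
  have hsum_bh : AlgebraicIndependent Ka (Sum.elim bf hf) :=
    algIndep_sumElim_of_adjoin hf_Ka hb'
  have hbf_Ka : AlgebraicIndependent Ka bf := by
    have h2 := hsum_bh.comp Sum.inl Sum.inl_injective
    rwa [Sum.elim_comp_inl] at h2
  have hsum_hb : AlgebraicIndependent Ka (Sum.elim hf bf) := by
    have h2 := hsum_bh.comp Sum.swap Sum.swap_leftInverse.injective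
    have h3 : (Sum.elim bf hf) ∘ Sum.swap = Sum.elim hf bf := by
      funext s; cases s <;> rfl
    rwa [h3] at h2
  have hfinal : AlgebraicIndependent (IntermediateField.adjoin Ka (Set.range bf)) hf :=
    algIndep_adjoin_of_sumElim hbf_Ka hsum_hb
  have hb4 : AlgebraicIndependent (IntermediateField.adjoin k (Sa ∪ Sb)) hf :=
    (algIndep_congr_carrier (IntermediateField.adjoin k (Sa ∪ Sb))
      (IntermediateField.adjoin Ka Sb) hcarb.symm hf).mpr hfinal
  exact ⟨isUnit_iff_ne_zero.mpr hdetg, isUnit_iff_ne_zero.mpr hdeth, hb3, hb4⟩
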